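/- Let R be a BL-ring that is a local ring. Then the prime ideals of R form a chain under inclusion, and every proper ideal of R is a power of a prime ideal of R. -/

import Mathlib

/-- In a local BL-ring, the prime ideals form a chain under inclusion and every
proper ideal is a power of a prime ideal. -/
theorem stmt_19 {R : Type*} [CommRing R] [IsLocalRing R]
    (h1 : ∀ I J : Ideal R, I ⊓ J = I * (J.colon I))
    (h2 : ∀ I J : Ideal R, J.colon I + I.colon J = ⊤) :
    (∀ P Q : Ideal R, P.IsPrime → Q.IsPrime → P ≤ Q ∨ Q ≤ P) ∧
      (∀ I : Ideal R, I ≠ ⊤ → ∃ (P : Ideal R) (n : ℕ), P.IsPrime ∧ I = P ^ n) := by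
  classical
  -- Step 1: ideals form a chain
  have chain : ∀ I J : Ideal R, I ≤ J ∨ J ≤ I := by
    intro I J
    have h21 := h2 I J
    have hor : J.colon I = ⊤ ∨ I.colon J = ⊤ := by
      by_contra hc
      push_neg at hc
      have l1 := IsLocalRing.le_maximalIdeal hc.1
      have l2 := IsLocalRing.le_maximalIdeal hc.2
      have hle : J.colon I + I.colon J ≤ IsLocalRing.maximalIdeal R := by
        rw [Submodule.add_eq_sup]; exact sup_le l1 l2
      rw [h21] at hle
      exact (IsLocalRing.maximalIdeal.isMaximal R).ne_top (top_le_iff.mp hle)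
    rcases hor with h | h
    · left; intro x hx
      have h1m : (1 : R) ∈ J.colon I := by rw [h]; trivial
      simpa using Submodule.mem_colon.mp h1m x hx
    · right; intro x hx
      have h1m : (1 : R) ∈ I.colon J := by rw [h]; trivial
      simpa using Submodule.mem_colon.mp h1m x hx
  -- Step 2: multiplication property
  have mult : ∀ {I J : Ideal R}, J ≤ I → J = I * (J.colon I) := by
    intro I J h
    have := h1 I J
    rwa [inf_eq_right.mpr h] at this
  -- Step 3: absorption: for prime P and C not below P, C*P = P
  have absorb : ∀ {P C : Ideal R}, P.IsPrime → ¬ C ≤ P → C * P = P := by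
    intro P C hP hC
    have hPC : P ≤ C := (chain P C).resolve_right hC
    have heq : P = C * (P.colon C) := mult hPC
    have hcol : P.colon C ≤ P := by
      rcases hP.mul_le.mp heq.ge with h | h
      · exact absurd h hC
      · exact h
    refine le_antisymm Ideal.mul_le_right ?_
    calc P = C * (P.colon C) := heq
      _ ≤ C * P := Ideal.mul_mono_right hcol
  -- Step 4: proper idempotent ideals are ⊥
  have idem : ∀ {E : Ideal R}, E ≠ ⊤ → E * E = E → E = ⊥ := by
    intro E hE hsq
    rw [eq_bot_iff]
    intro s hs
    have hS : Ideal.span {s} ≤ E := by rwa [Ideal.span_singleton_le_iff_mem]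
    have heq := mult hS
    have h2' : Ideal.span {s} = E * Ideal.span {s} := by
      conv_lhs => rw [heq]
      conv_rhs => rw [heq]
      rw [← mul_assoc, hsq]
    have hsmem : s ∈ E * Ideal.span {s} := h2' ▸ Ideal.mem_span_singleton_self s
    obtain ⟨z, hz, hzs⟩ := Ideal.mem_mul_span_singleton.mp hsmem
    have hzm : z ∈ IsLocalRing.maximalIdeal R := IsLocalRing.le_maximalIdeal hE hz
    have hu : IsUnit (1 - z) := IsLocalRing.isUnit_one_sub_self_of_mem_nonunits z hzm
    have h0 : (1 - z) * s = 0 := by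
      have : (1 - z) * s = s - z * s := by ring
      rw [this, hzs, sub_self]
    have : s = 0 := by
      have := hu.mul_right_eq_zero.mp h0
      exact this
    simp [this]
  refine ⟨fun P Q _ _ => chain P Q, fun I hI => ?_⟩
  set P := I.radical with hPdef
  -- P is prime
  have hPprime : P.IsPrime := by
    rw [Ideal.isPrime_iff]
    constructor
    · intro h
      exact hI (Ideal.radical_eq_top.mp h)
    · intro x y hxy
      obtain ⟨n, hn⟩ := Ideal.mem_radical_iff.mp hxy
      rw [mul_pow] at hn
      rcases chain (Ideal.span {x ^ n}) (Ideal.span {y ^ n}) with hc | hc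
      · left
        have hx : x ^ n ∈ Ideal.span {y ^ n} := hc (Ideal.mem_span_singleton_self _)
        obtain ⟨c, hcx⟩ := Ideal.mem_span_singleton'.mp hx
        refine Ideal.mem_radical_iff.mpr ⟨n + n, ?_⟩
        have : x ^ (n + n) = c * (x ^ n * y ^ n) := by
          rw [pow_add]
          nth_rewrite 1 [← hcx]
          ring
        rw [this]
        exact I.mul_mem_left c hn
      · right
        have hy : y ^ n ∈ Ideal.span {x ^ n} := hc (Ideal.mem_span_singleton_self _)
        obtain ⟨c, hcy⟩ := Ideal.mem_span_singleton'.mp hy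
        refine Ideal.mem_radical_iff.mpr ⟨n + n, ?_⟩
        have : y ^ (n + n) = c * (x ^ n * y ^ n) := by
          rw [pow_add]
          nth_rewrite 1 [← hcy]
          ring
        rw [this]
        exact I.mul_mem_left c hn
  have hIP : I ≤ P := Ideal.le_radical
  by_cases hpow : ∀ n, I ≤ P ^ n
  · by_cases hlow : ∃ k, P ^ k ≤ I
    · obtain ⟨k, hk⟩ := hlow
      exact ⟨P, k, hPprime, le_antisymm (hpow k) hk⟩
    · exfalso
      push_neg at hlow
      by_cases hsq : P * P = P
      · have hPbot : P = ⊥ := idem hPprime.ne_top hsq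
        exact hlow 1 (by rw [pow_one, hPbot]; exact bot_le)
      · have hlt : P * P < P := lt_of_le_of_ne Ideal.mul_le_left hsq
        obtain ⟨a, haP, haP2⟩ := SetLike.exists_of_lt hlt
        have hspan : Ideal.span {a} ≤ P := by rwa [Ideal.span_singleton_le_iff_mem]
        have heq := mult hspan
        have hD : ¬ (Ideal.span {a}).colon P ≤ P := by
          intro h
          apply haP2
          have hle2 : Ideal.span {a} ≤ P * P := heq.le.trans (Ideal.mul_mono_right h)
          exact hle2 (Ideal.mem_span_singleton_self a)
        have hPa : P = Ideal.span {a} := by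
          rw [heq, mul_comm]
          exact (absorb hPprime hD).symm
        obtain ⟨n, hn⟩ : ∃ n, a ^ n ∈ I := Ideal.mem_radical_iff.mp haP
        have hIn : I ≤ P ^ (n + 1) := hpow (n + 1)
        rw [hPa, Ideal.span_singleton_pow] at hIn
        obtain ⟨c, hc⟩ := Ideal.mem_span_singleton'.mp (hIn hn)
        have hz : a ^ n * (1 - c * a) = 0 := by
          have : a ^ n * (1 - c * a) = a ^ n - c * a ^ (n + 1) := by ring
          rw [this, hc, sub_self]
        have hu : IsUnit (1 - c * a) := by
          have hca : c * a ∈ IsLocalRing.maximalIdeal R :=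
            IsLocalRing.le_maximalIdeal hPprime.ne_top (P.mul_mem_left c haP)
          exact IsLocalRing.isUnit_one_sub_self_of_mem_nonunits _ hca
        have han : a ^ n = 0 := hu.mul_left_eq_zero.mp hz
        apply hlow n
        rw [hPa, Ideal.span_singleton_pow, Ideal.span_singleton_eq_bot.mpr han]
        exact bot_le
  · push_neg at hpow
    have hfind := Nat.find_spec hpow
    set k := Nat.find hpow with hk
    have hk0 : k ≠ 0 := by
      intro h
      exact hfind (by rw [h, pow_zero, Ideal.one_eq_top]; exact le_top)
    have hk1 : k ≠ 1 := fun h => hfind (by rw [h, pow_one]; exact hIP)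
    obtain ⟨j, hj⟩ : ∃ j, k = j + 1 :=
      ⟨k - 1, (Nat.succ_pred_eq_of_pos (Nat.pos_of_ne_zero hk0)).symm⟩
    have hj1 : j ≠ 0 := by omega
    have hIj : I ≤ P ^ j := not_not.mp (Nat.find_min hpow (by omega))
    have heq := mult hIj
    set C := I.colon ((P ^ j : Ideal R) : Set R) with hC
    have hCP : ¬ C ≤ P := by
      intro h
      apply hfind
      rw [hj, pow_succ]
      calc I = P ^ j * C := heq
        _ ≤ P ^ j * P := Ideal.mul_mono_right h
    have habs : C * P = P := absorb hPprime hCP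
    refine ⟨P, j, hPprime, ?_⟩
    obtain ⟨i, hi⟩ : ∃ i, j = i + 1 := ⟨j - 1, by omega⟩
    calc I = P ^ j * C := heq
      _ = P ^ i * (C * P) := by rw [hi, pow_succ]; ring
      _ = P ^ i * P := by rw [habs]
      _ = P ^ j := by rw [hi, pow_succ]
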